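/- Let n ≥ 2 be odd, n = 2k+1, and let β_q be the coefficient of t^q in the power series (1-t^{2k+2})/((1-t²)(1-t^{2k})). Then the limit as q → ∞ of (1/q) ∑_{j=0}^{q} (-1)^j β_j exists and equals (n+1)/(2(n-1)). -/

import Mathlib

open PowerSeries Filter

private def gg (k : ℕ) (j : ℕ) : ℚ :=
  if 2 ∣ j then (if j ≠ 0 ∧ 2 * k ∣ j then 2 else 1) else 0

private lemma gg_odd (k j : ℕ) (h : ¬ 2 ∣ j) : gg k j = 0 := if_neg h

private lemma gg_one (k j : ℕ) (h2 : 2 ∣ j) (h : ¬(j ≠ 0 ∧ 2 * k ∣ j)) : gg k j = 1 := by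
  rw [gg, if_pos h2, if_neg h]

private lemma gg_two (k j : ℕ) (h2 : 2 ∣ j) (h0 : j ≠ 0) (hd : 2 * k ∣ j) : gg k j = 2 := by
  rw [gg, if_pos h2, if_pos ⟨h0, hd⟩]

private lemma tendsto_mod_div (d : ℕ) (hd : 0 < d) :
    Tendsto (fun q : ℕ => ((q % d : ℕ) : ℝ) / q) atTop (nhds 0) := by
  apply squeeze_zero (fun q => by positivity) (fun q => ?_)
    (tendsto_const_div_atTop_nhds_zero_nat (d : ℝ))
  gcongr
  exact_mod_cast (Nat.mod_lt _ hd).le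

private lemma tendsto_div_nat (d : ℕ) (hd : 0 < d) :
    Tendsto (fun q : ℕ => ((q / d : ℕ) : ℝ) / q) atTop (nhds (1 / d)) := by
  have hd' : (d : ℝ) ≠ 0 := by positivity
  have h1 : ∀ᶠ q : ℕ in atTop,
      (1 - ((q % d : ℕ) : ℝ) / q) / d = ((q / d : ℕ) : ℝ) / q := by
    filter_upwards [eventually_gt_atTop 0] with q hq
    have hq' : (q : ℝ) ≠ 0 := by positivity
    have hm : ((d : ℝ)) * ((q / d : ℕ) : ℝ) + ((q % d : ℕ) : ℝ) = q := by
      exact_mod_cast Nat.div_add_mod q d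
    field_simp
    linear_combination -hm
  have h2 : Tendsto (fun q : ℕ => (1 - ((q % d : ℕ) : ℝ) / q) / d) atTop
      (nhds ((1 - 0) / d)) :=
    (tendsto_const_nhds.sub (tendsto_mod_div d hd)).div_const d
  rw [sub_zero] at h2
  exact h2.congr' h1

theorem average_betti_odd (n k : ℕ) (hk : 1 ≤ k) (hn : n = 2 * k + 1)
    (P : PowerSeries ℚ)
    (hP : P * ((1 - X ^ 2) * (1 - X ^ (2 * k))) = 1 - X ^ (2 * k + 2)) :
    Tendsto (fun q : ℕ =>
        (∑ j ∈ Finset.range (q + 1), (-1 : ℝ) ^ j * ((PowerSeries.coeff (R := ℚ) j) P : ℝ)) / q)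
      atTop (nhds ((n + 1) / (2 * (n - 1)) : ℝ)) := by
  have key : P - P * X ^ 2 - P * X ^ (2*k) + P * X ^ (2*k+2) = 1 - X ^ (2*k+2) := by
    rw [← hP]; ring
  have hrec : ∀ j : ℕ, coeff (R := ℚ) j P
      = (if j = 0 then 1 else 0) - (if j = 2*k+2 then 1 else 0)
        + (if 2 ≤ j then coeff (R := ℚ) (j-2) P else 0)
        + (if 2*k ≤ j then coeff (R := ℚ) (j-2*k) P else 0)
        - (if 2*k+2 ≤ j then coeff (R := ℚ) (j-(2*k+2)) P else 0) := by
    intro j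
    have h := congrArg (coeff (R := ℚ) j) key
    simp only [map_sub, map_add, coeff_mul_X_pow', coeff_one, coeff_X_pow] at h
    linarith [h]
  have hco : ∀ j, coeff (R := ℚ) j P = gg k j := by
    intro j
    induction j using Nat.strong_induction_on with
    | _ j ih =>
      rw [hrec j]
      have e1 : (if 2 ≤ j then coeff (R := ℚ) (j-2) P else 0)
          = (if 2 ≤ j then gg k (j-2) else 0) := by
        split_ifs with h
        · exact ih _ (by omega)
        · rfl
      have e2 : (if 2*k ≤ j then coeff (R := ℚ) (j-2*k) P else 0)
          = (if 2*k ≤ j then gg k (j-2*k) else 0) := by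
        split_ifs with h
        · exact ih _ (by omega)
        · rfl
      have e3 : (if 2*k+2 ≤ j then coeff (R := ℚ) (j-(2*k+2)) P else 0)
          = (if 2*k+2 ≤ j then gg k (j-(2*k+2)) else 0) := by
        split_ifs with h
        · exact ih _ (by omega)
        · rfl
      rw [e1, e2, e3]
      have notc : ∀ m : ℕ, ¬ 2*k ∣ m → ¬(m ≠ 0 ∧ 2*k ∣ m) := fun m h hm => h hm.2
      have small : ∀ m : ℕ, m < 2*k → ¬(m ≠ 0 ∧ 2*k ∣ m) := by
        rintro m hm ⟨hne, hd⟩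
        exact absurd (Nat.le_of_dvd (Nat.pos_of_ne_zero hne) hd) (by omega)
      by_cases hj2 : 2 ∣ j
      · -- even case
        by_cases h0 : j = 0
        · subst h0
          rw [gg_one k 0 (by omega) (by omega)]
          rw [if_pos rfl, if_neg (by omega), if_neg (by omega), if_neg (by omega),
            if_neg (by omega)]
          norm_num
        · by_cases hjlt : j < 2*k
          · rw [gg_one k j hj2 (small j hjlt)]
            rw [if_neg h0, if_neg (by omega), if_pos (by omega), if_neg (by omega),
              if_neg (by omega)]
            rw [gg_one k (j-2) (by omega) (small _ (by omega))]
            norm_num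
          · by_cases hje : j = 2*k
            · subst hje
              rw [gg_two k (2*k) (by omega) (by omega) dvd_rfl]
              rw [if_neg (by omega), if_neg (by omega), if_pos (by omega),
                if_pos (by omega), if_neg (by omega)]
              rw [gg_one k (2*k-2) (by omega) (small _ (by omega))]
              rw [show 2*k - 2*k = 0 by omega,
                gg_one k 0 (by omega) (by omega)]
              norm_num
            · by_cases hje2 : j = 2*k+2
              · subst hje2
                rw [if_neg (by omega), if_pos rfl, if_pos (by omega),
                  if_pos (by omega), if_pos (by omega)]
                rw [show 2*k+2-2 = 2*k by omega, show 2*k+2-2*k = 2 by omega,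
                  show 2*k+2-(2*k+2) = 0 by omega]
                rw [gg_two k (2*k) (by omega) (by omega) dvd_rfl,
                  gg_one k 0 (by omega) (by omega)]
                by_cases hk1 : k = 1
                · subst hk1
                  rw [gg_two 1 2 (by omega) (by omega) (by omega),
                    gg_two 1 (2*1+2) (by omega) (by omega) (by omega)]
                  norm_num
                · have hnd : ¬ 2*k ∣ 2*k+2 := by
                    intro hd
                    have h2 : 2*k ∣ 2 := by
                      have := Nat.dvd_sub hd (dvd_refl (2*k))
                      rwa [show 2*k+2-2*k = 2 by omega] at this
                    exact absurd (Nat.le_of_dvd (by omega) h2) (by omega)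
                  rw [gg_one k 2 (by omega) (small _ (by omega))]
                  rw [gg_one k (2*k+2) (by omega) (notc _ hnd)]
                  norm_num
              · -- j ≥ 2k+4
                have hj4 : 2*k+4 ≤ j := by omega
                rw [if_neg h0, if_neg hje2, if_pos (by omega), if_pos (by omega),
                  if_pos (by omega)]
                have hiff : 2*k ∣ j - 2*k ↔ 2*k ∣ j := by
                  constructor
                  · intro hd
                    have := dvd_add hd (dvd_refl (2*k))
                    rwa [Nat.sub_add_cancel (by omega)] at this
                  · intro hd; exact Nat.dvd_sub hd dvd_rfl
                have hiff2 : 2*k ∣ j - (2*k+2) ↔ 2*k ∣ j - 2 := by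
                  constructor
                  · intro hd
                    have := dvd_add hd (dvd_refl (2*k))
                    rwa [show j - (2*k+2) + 2*k = j - 2 by omega] at this
                  · intro hd
                    have := Nat.dvd_sub hd (dvd_refl (2*k))
                    rwa [show j - 2 - 2*k = j - (2*k+2) by omega] at this
                by_cases hdj : 2*k ∣ j
                · rw [gg_two k j hj2 h0 hdj,
                    gg_two k (j-2*k) (by omega) (by omega) (hiff.mpr hdj)]
                  by_cases hdj2 : 2*k ∣ j - 2
                  · rw [gg_two k (j-2) (by omega) (by omega) hdj2,
                      gg_two k (j-(2*k+2)) (by omega) (by omega) (hiff2.mpr hdj2)]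
                    norm_num
                  · rw [gg_one k (j-2) (by omega) (notc _ hdj2),
                      gg_one k (j-(2*k+2)) (by omega) (notc _ (fun hd => hdj2 (hiff2.mp hd)))]
                    norm_num
                · rw [gg_one k j hj2 (notc _ hdj),
                    gg_one k (j-2*k) (by omega) (notc _ (fun hd => hdj (hiff.mp hd)))]
                  by_cases hdj2 : 2*k ∣ j - 2
                  · rw [gg_two k (j-2) (by omega) (by omega) hdj2,
                      gg_two k (j-(2*k+2)) (by omega) (by omega) (hiff2.mpr hdj2)]
                    norm_num
                  · rw [gg_one k (j-2) (by omega) (notc _ hdj2),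
                      gg_one k (j-(2*k+2)) (by omega) (notc _ (fun hd => hdj2 (hiff2.mp hd)))]
                    norm_num
      · -- odd case
        rw [gg_odd k j hj2]
        have t1 : (if 2 ≤ j then gg k (j-2) else 0) = 0 := by
          split_ifs with h
          · exact gg_odd _ _ (by omega)
          · rfl
        have t2 : (if 2*k ≤ j then gg k (j-2*k) else 0) = 0 := by
          split_ifs with h
          · exact gg_odd _ _ (by omega)
          · rfl
        have t3 : (if 2*k+2 ≤ j then gg k (j-(2*k+2)) else 0) = 0 := by
          split_ifs with h
          · exact gg_odd _ _ (by omega)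
          · rfl
        rw [t1, t2, t3, if_neg (by omega), if_neg (by omega)]
        norm_num
  -- closed form for the partial sums
  have hsum : ∀ q : ℕ, ∑ j ∈ Finset.range (q + 1), (-1 : ℝ) ^ j * ((coeff (R := ℚ) j P : ℚ) : ℝ)
      = ((q/2 : ℕ) : ℝ) + 1 + ((q/(2*k) : ℕ) : ℝ) := by
    intro q
    induction q with
    | zero =>
      simp [hco 0, gg_one k 0 (by omega) (by omega)]
    | succ q ih =>
      rw [Finset.sum_range_succ, ih, hco (q+1)]
      rw [Nat.succ_div, Nat.succ_div (b := 2*k)]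
      by_cases hd2 : 2 ∣ (q+1)
      · have hpow : (-1 : ℝ) ^ (q+1) = 1 := by
          obtain ⟨c, hc⟩ := hd2
          exact Even.neg_one_pow ⟨c, by omega⟩
        by_cases hdk : 2*k ∣ (q+1)
        · rw [gg_two k (q+1) hd2 (by omega) hdk, if_pos hd2, if_pos hdk, hpow]
          push_cast
          ring
        · rw [gg_one k (q+1) hd2 (by tauto), if_pos hd2, if_neg hdk, hpow]
          push_cast
          ring
      · have hdk : ¬ 2*k ∣ (q+1) := fun h => hd2 (dvd_trans ⟨k, rfl⟩ h)
        rw [gg_odd k (q+1) hd2, if_neg hd2, if_neg hdk]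
        push_cast
        ring
  -- limits
  have h2 := tendsto_div_nat 2 (by norm_num)
  have h2k := tendsto_div_nat (2*k) (by omega)
  have h1 : Tendsto (fun q : ℕ => (1 : ℝ)/q) atTop (nhds 0) :=
    tendsto_one_div_atTop_nhds_zero_nat
  have hfun : (fun q : ℕ =>
      (∑ j ∈ Finset.range (q + 1), (-1 : ℝ) ^ j * ((PowerSeries.coeff (R := ℚ) j) P : ℝ)) / q)
      = fun q : ℕ => ((q/2 : ℕ) : ℝ)/q + (1:ℝ)/q + ((q/(2*k) : ℕ) : ℝ)/q := by
    funext q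
    rw [hsum q]
    ring
  rw [hfun]
  have hlim := (h2.add h1).add h2k
  convert hlim using 2
  subst hn
  have hk' : (k : ℝ) ≠ 0 := by positivity
  push_cast
  field_simp
  ring
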